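/- Let a₁ ≤ a₂ ≤ … ≤ a_n be a weakly increasing integer sequence with 1 ≤ a_i ≤ n and exactly one fixed point f. Define a'_y = a_y − y for y ≤ f and a'_z = z − a_z for f < z ≤ n. If there are indices x < y < z ≤ f with a'_x > a'_y, a'_z > a'_y and a'_x > a'_z, then there exists an index w with x < w < y and a'_w = a'_z. -/

import Mathlib

/-- The auxiliary sequence `a'`: `a' y = a y - y` for `y ≤ f`, and
`a' z = z - a z` for `z > f`. -/
def aprime (a : ℕ → ℤ) (f : ℕ) (k : ℕ) : ℤ :=
  if k ≤ f then a k - k else (k : ℤ) - a k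

/-- for a weakly increasing sequence `1 ≤ a₁ ≤ … ≤ a_n ≤ n` with
exactly one fixed point `f`, if `x < y < z ≤ f` with `a'_x > a'_y`, `a'_z > a'_y`
and `a'_x > a'_z`, then there is `w` with `x < w < y` and `a'_w = a'_z`. -/
theorem fixed_point_sequence_cover (n f : ℕ) (a : ℕ → ℤ)
    (hmono : ∀ i ∈ Set.Icc 1 n, ∀ j ∈ Set.Icc 1 n, i ≤ j → a i ≤ a j)
    (hbd : ∀ i ∈ Set.Icc 1 n, 1 ≤ a i ∧ a i ≤ n)
    (hf : f ∈ Set.Icc 1 n) (haf : a f = f)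
    (huniq : ∀ k ∈ Set.Icc 1 n, a k = k → k = f)
    (x y z : ℕ) (hx : 1 ≤ x) (hxy : x < y) (hyz : y < z) (hzf : z ≤ f)
    (h1 : aprime a f x > aprime a f y) (h2 : aprime a f z > aprime a f y)
    (h3 : aprime a f x > aprime a f z) :
    ∃ w, x < w ∧ w < y ∧ aprime a f w = aprime a f z := by
  classical
  obtain ⟨hf1, hfn⟩ := hf
  have hyf : y ≤ f := le_of_lt (lt_of_lt_of_le hyz hzf)
  have hstep : ∀ k, x ≤ k → k < y → aprime a f k - 1 ≤ aprime a f (k + 1) := by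
    intro k hk1 hk2
    have hmon := hmono k ⟨le_trans hx hk1, by omega⟩ (k + 1) ⟨by omega, by omega⟩
      (by omega)
    unfold aprime
    rw [if_pos (by omega : k ≤ f), if_pos (by omega : k + 1 ≤ f)]
    push_cast; linarith
  have hexists : ∃ m, aprime a f (x + m) ≤ aprime a f z :=
    ⟨y - x, by rw [show x + (y - x) = y by omega]; exact le_of_lt h2⟩
  set m := Nat.find hexists with hmdef
  have hm : aprime a f (x + m) ≤ aprime a f z := Nat.find_spec hexists
  have hmpos : 0 < m := by
    rcases Nat.eq_zero_or_pos m with h | h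
    · rw [h, Nat.add_zero] at hm; exact absurd hm (not_le.mpr h3)
    · exact h
  have hmy : m ≤ y - x := Nat.find_min' hexists
    (by rw [show x + (y - x) = y by omega]; exact le_of_lt h2)
  have hprev : aprime a f z < aprime a f (x + (m - 1)) := by
    have := Nat.find_min hexists (show m - 1 < m by omega)
    exact lt_of_not_ge this
  have hstep' := hstep (x + (m - 1)) (by omega) (by omega)
  rw [show x + (m - 1) + 1 = x + m by omega] at hstep'
  have heq : aprime a f (x + m) = aprime a f z := by omega
  refine ⟨x + m, by omega, ?_, heq⟩
  rcases Nat.lt_or_ge (x + m) y with h | h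
  · exact h
  · have : x + m = y := by omega
    rw [this] at heq; exact absurd heq (by linarith)
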